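/- Fix constants C ∈ ℝ and τ > 0. For n large enough that γ(n,τ) > 0, set R = 2·log(n) + C, ρ(n) = R − log((π/2)·e^{C/2}·γ(n,τ)), and θ_n = arccos((cosh(ρ(n))² − cosh(R))/sinh(ρ(n))²). Then (2π/θ_n)·γ(n,τ)/(2n) → 1 as n → ∞; that is, the number of sectors of angular width θ_n needed to cover the full angle 2π equals (2n/γ(n,τ))·(1 ± o(1)). -/

import Mathlib

open Filter

/-- Twice iterated natural logarithm. -/
noncomputable def loglog (n : ℕ) : ℝ := Real.log (Real.log n)

/-- Thrice iterated natural logarithm. -/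
noncomputable def logloglog (n : ℕ) : ℝ := Real.log (Real.log (Real.log n))

/-- `γ(n, τ) = log(τ·log^{(2)}(n) / (2·(log^{(3)}(n))²))`. -/
noncomputable def gam (n : ℕ) (τ : ℝ) : ℝ :=
  Real.log (τ * loglog n / (2 * (logloglog n) ^ 2))

/-- The radius `R = 2·log n + C` of the hyperbolic disk. -/
noncomputable def bigR (C : ℝ) (n : ℕ) : ℝ := 2 * Real.log n + C

/-- The threshold radius `ρ(n) = R − log((π/2)·e^{C/2}·γ(n,τ))`. -/
noncomputable def rho (C τ : ℝ) (n : ℕ) : ℝ :=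
  bigR C n - Real.log (Real.pi / 2 * Real.exp (C / 2) * gam n τ)

/-- `θ_n`, the maximal angular distance at which two points of radius `ρ(n)` are
adjacent in the hyperbolic disk of radius `R`, i.e. the angle `θ` with
`cosh(ρ(n))² − sinh(ρ(n))²·cos(θ) = cosh(R)`. -/
noncomputable def theta (C τ : ℝ) (n : ℕ) : ℝ :=
  Real.arccos ((Real.cosh (rho C τ n) ^ 2 - Real.cosh (bigR C n)) /
    Real.sinh (rho C τ n) ^ 2)

/- ### Auxiliary material -/

/-- The auxiliary quantity `s_n = sinh(R/2)/sinh(ρ)`. -/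
noncomputable def sfun (C τ : ℝ) (n : ℕ) : ℝ :=
  Real.sinh (bigR C n / 2) / Real.sinh (rho C τ n)

lemma loglog_tendsto : Tendsto loglog atTop atTop :=
  Real.tendsto_log_atTop.comp (Real.tendsto_log_atTop.comp tendsto_natCast_atTop_atTop)

lemma logloglog_tendsto : Tendsto logloglog atTop atTop :=
  Real.tendsto_log_atTop.comp loglog_tendsto

lemma x_div_log_sq_tendsto : Tendsto (fun x : ℝ => x / Real.log x ^ 2) atTop atTop := by
  have h0 : Tendsto (fun x : ℝ => Real.log x ^ 2 / x) atTop (nhds 0) := by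
    simpa using Real.tendsto_pow_log_div_mul_add_atTop 1 0 2 one_ne_zero
  have hpos : ∀ᶠ x : ℝ in atTop, Real.log x ^ 2 / x ∈ Set.Ioi (0:ℝ) := by
    filter_upwards [eventually_ge_atTop (3:ℝ)] with x hx
    have hx0 : (0:ℝ) < x := by linarith
    have hlog : 0 < Real.log x := Real.log_pos (by linarith)
    exact div_pos (by positivity) hx0
  have h1 : Tendsto (fun x : ℝ => Real.log x ^ 2 / x) atTop (nhdsWithin 0 (Set.Ioi 0)) :=
    tendsto_nhdsWithin_iff.2 ⟨h0, hpos⟩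
  have h2 := h1.inv_tendsto_nhdsGT_zero
  refine h2.congr fun x => ?_
  simp [inv_div]

lemma gam_tendsto (τ : ℝ) (hτ : 0 < τ) :
    Tendsto (fun n : ℕ => gam n τ) atTop atTop := by
  have h1 : Tendsto (fun n : ℕ => τ * loglog n / (2 * logloglog n ^ 2)) atTop atTop := by
    have h2 := ((x_div_log_sq_tendsto.const_mul_atTop
      (show (0:ℝ) < τ / 2 by positivity)).comp loglog_tendsto)
    refine h2.congr fun n => ?_
    simp only [Function.comp_apply, loglog, logloglog]
    ring
  exact Real.tendsto_log_atTop.comp h1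

lemma gam_le (τ : ℝ) (hτ : 0 < τ) :
    ∀ᶠ n : ℕ in atTop, gam n τ ≤ Real.log τ + Real.log n := by
  filter_upwards [logloglog_tendsto.eventually_ge_atTop 1,
    loglog_tendsto.eventually_ge_atTop 1,
    (Real.tendsto_log_atTop.comp tendsto_natCast_atTop_atTop).eventually_ge_atTop 1]
    with n h3 h2 h1
  have hu : (0:ℝ) < loglog n := by linarith
  have hv : (1:ℝ) ≤ 2 * logloglog n ^ 2 := by nlinarith
  have hb : τ * loglog n / (2 * logloglog n ^ 2) ≤ τ * loglog n :=
    div_le_self (by positivity) hv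
  have hb2 : gam n τ ≤ Real.log (τ * loglog n) := by
    unfold gam
    exact Real.log_le_log (by positivity) hb
  have hb3 : Real.log (τ * loglog n) = Real.log τ + Real.log (loglog n) :=
    Real.log_mul (ne_of_gt hτ) (ne_of_gt hu)
  have hb4 : Real.log (loglog n) ≤ loglog n := Real.log_le_self hu.le
  have hb5 : loglog n ≤ Real.log n := Real.log_le_self (by have h1' : (1:ℝ) ≤ Real.log n := h1; linarith)
  have : gam n τ ≤ Real.log τ + Real.log (loglog n) := hb2.trans_eq hb3
  simp only [loglog] at this hb4 hb5
  linarith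

lemma log_div_n_tendsto : Tendsto (fun n : ℕ => Real.log n / n) atTop (nhds 0) := by
  have h := (Real.tendsto_pow_log_div_mul_add_atTop 1 0 1 one_ne_zero).comp
    tendsto_natCast_atTop_atTop
  refine h.congr fun n => ?_
  simp

lemma gam_div_n_tendsto (τ : ℝ) (hτ : 0 < τ) :
    Tendsto (fun n : ℕ => gam n τ / n) atTop (nhds 0) := by
  have hg : Tendsto (fun n : ℕ => (Real.log τ + Real.log n) / n) atTop (nhds 0) := by
    have h1 := tendsto_const_div_atTop_nhds_zero_nat (Real.log τ)
    have h2 := log_div_n_tendsto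
    have := h1.add h2
    simpa [add_div] using this
  have h0 : ∀ᶠ n : ℕ in atTop, 0 ≤ gam n τ / n := by
    filter_upwards [(gam_tendsto τ hτ).eventually_ge_atTop 0, eventually_ge_atTop 1]
      with n hn hn1
    have : (0:ℝ) < n := by exact_mod_cast hn1
    positivity
  have hle : ∀ᶠ n : ℕ in atTop, gam n τ / n ≤ (Real.log τ + Real.log n) / n := by
    filter_upwards [gam_le τ hτ, eventually_ge_atTop 1] with n hn hn1
    have hN : (0:ℝ) < n := by exact_mod_cast hn1
    gcongr
  exact squeeze_zero' h0 hle hg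

lemma bigR_tendsto (C : ℝ) : Tendsto (fun n : ℕ => bigR C n) atTop atTop := by
  have h := (Real.tendsto_log_atTop.comp tendsto_natCast_atTop_atTop).const_mul_atTop
    (show (0:ℝ) < 2 by norm_num)
  exact tendsto_atTop_add_const_right _ C h

lemma rho_tendsto (C τ : ℝ) (hτ : 0 < τ) :
    Tendsto (fun n : ℕ => rho C τ n) atTop atTop := by
  set K : ℝ := Real.pi / 2 * Real.exp (C / 2) with hK
  have hKpos : 0 < K := by positivity
  have hlow : ∀ᶠ n : ℕ in atTop,
      Real.log n + (C - Real.log K - Real.log τ - 1) ≤ rho C τ n := by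
    filter_upwards [(gam_tendsto τ hτ).eventually_ge_atTop 1, gam_le τ hτ] with n hg hgle
    have hgpos : (0:ℝ) < gam n τ := by linarith
    have h1 : Real.log (K * gam n τ) = Real.log K + Real.log (gam n τ) :=
      Real.log_mul (ne_of_gt hKpos) (ne_of_gt hgpos)
    have h2 : Real.log (gam n τ) ≤ gam n τ - 1 := Real.log_le_sub_one_of_pos hgpos
    have h3 : rho C τ n = 2 * Real.log n + C - Real.log (K * gam n τ) := rfl
    rw [h3, h1]
    linarith
  refine tendsto_atTop_mono' _ hlow ?_
  exact tendsto_atTop_add_const_right _ _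
    (Real.tendsto_log_atTop.comp tendsto_natCast_atTop_atTop)

lemma s_eq (C τ : ℝ) (hτ : 0 < τ) {n : ℕ} (hn : 1 ≤ n) (hg : 0 < gam n τ)
    (hr : 0 < rho C τ n) :
    sfun C τ n = Real.pi * gam n τ / (2 * n) *
      ((1 - Real.exp (-bigR C n)) / (1 - Real.exp (-(2 * rho C τ n)))) := by
  set N : ℝ := (n : ℝ) with hNdef
  have hN : (0:ℝ) < N := by rw [hNdef]; exact_mod_cast Nat.lt_of_lt_of_le Nat.zero_lt_one hn
  set E : ℝ := Real.exp (C / 2) with hE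
  have hEpos : 0 < E := Real.exp_pos _
  have hKg : 0 < Real.pi / 2 * E * gam n τ := by positivity
  have heR2 : Real.exp (bigR C n / 2) = N * E := by
    rw [show bigR C n / 2 = Real.log N + C / 2 by simp [bigR]; ring,
      Real.exp_add, Real.exp_log hN]
  have heR : Real.exp (bigR C n) = (N * E) ^ 2 := by
    rw [show bigR C n = bigR C n / 2 + bigR C n / 2 by ring, Real.exp_add, heR2]; ring
  have herho : Real.exp (rho C τ n) = (N * E) ^ 2 / (Real.pi / 2 * E * gam n τ) := by
    rw [rho, Real.exp_sub, heR, Real.exp_log hKg]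
  have he2rho : Real.exp (2 * rho C τ n) = Real.exp (rho C τ n) ^ 2 := by
    rw [two_mul, Real.exp_add]; ring
  have herpos : (1:ℝ) < Real.exp (rho C τ n) := Real.one_lt_exp_iff.2 hr
  have hsinh : 0 < Real.sinh (rho C τ n) := by
    rw [Real.sinh_pos_iff]; exact hr
  have hden : 0 < 1 - Real.exp (-(2 * rho C τ n)) := by
    have : Real.exp (-(2 * rho C τ n)) < 1 := Real.exp_lt_one_iff.2 (by linarith)
    linarith
  rw [sfun, div_mul_div_comm, div_eq_div_iff (ne_of_gt hsinh) (by positivity)]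
  rw [Real.sinh_eq, Real.sinh_eq]
  simp only [Real.exp_neg]
  rw [he2rho, herho, heR, heR2]
  have hg' : gam n τ ≠ 0 := ne_of_gt hg
  have hπ : Real.pi ≠ 0 := Real.pi_ne_zero
  field_simp

lemma theta_eq (C τ : ℝ) {n : ℕ} (hr : 0 < rho C τ n) (hR : 0 ≤ bigR C n)
    (hs1 : sfun C τ n ≤ 1) :
    theta C τ n = 2 * Real.arcsin (sfun C τ n) := by
  have hsρ : 0 < Real.sinh (rho C τ n) := by rw [Real.sinh_pos_iff]; exact hr
  have hs0 : 0 ≤ sfun C τ n := by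
    apply div_nonneg _ hsρ.le
    have h0 : (0:ℝ) ≤ bigR C n / 2 := by linarith
    exact Real.sinh_nonneg_iff.2 h0
  have hcR : Real.cosh (bigR C n) = 2 * Real.sinh (bigR C n / 2) ^ 2 + 1 := by
    rw [show bigR C n = 2 * (bigR C n / 2) by ring, Real.cosh_two_mul, Real.cosh_sq]; ring
  have h1 : (Real.cosh (rho C τ n) ^ 2 - Real.cosh (bigR C n)) /
      Real.sinh (rho C τ n) ^ 2 = 1 - 2 * sfun C τ n ^ 2 := by
    rw [Real.cosh_sq, hcR, sfun, div_pow]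
    field_simp
    ring
  have h2 : (1:ℝ) - 2 * sfun C τ n ^ 2 = Real.cos (2 * Real.arcsin (sfun C τ n)) := by
    rw [Real.cos_two_mul, Real.cos_sq', Real.sin_arcsin (by linarith) hs1]
    ring
  rw [theta, h1, h2, Real.arccos_cos]
  · have := Real.arcsin_nonneg.2 hs0
    linarith
  · have := Real.arcsin_le_pi_div_two (sfun C τ n)
    linarith

lemma arcsin_slope : Tendsto (fun y : ℝ => y / Real.arcsin y)
    (nhdsWithin 0 {(0:ℝ)}ᶜ) (nhds 1) := by
  have h : HasDerivAt Real.arcsin 1 0 := by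
    have := Real.hasDerivAt_arcsin (x := 0) (by norm_num) (by norm_num)
    simpa using this
  rw [hasDerivAt_iff_tendsto_slope] at h
  have h2 : Tendsto (fun y : ℝ => Real.arcsin y / y) (nhdsWithin 0 {(0:ℝ)}ᶜ) (nhds 1) := by
    refine h.congr fun y => ?_
    simp [slope_def_field, Real.arcsin_zero]
  have h3 := h2.inv₀ one_ne_zero
  simpa [inv_div] using h3

theorem num_sectors_asymptotics (C τ : ℝ) (hτ : 0 < τ) :
    Tendsto (fun n : ℕ => (2 * Real.pi / theta C τ n) * gam n τ / (2 * n))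
      atTop (nhds 1) := by
  have hgam := gam_tendsto τ hτ
  have hrho := rho_tendsto C τ hτ
  have hR := bigR_tendsto C
  have hEv : ∀ᶠ n : ℕ in atTop,
      1 ≤ n ∧ 0 < gam n τ ∧ 0 < rho C τ n ∧ 0 < bigR C n := by
    filter_upwards [eventually_ge_atTop 1, hgam.eventually_gt_atTop 0,
      hrho.eventually_gt_atTop 0, hR.eventually_gt_atTop 0] with n a b c d
    exact ⟨a, b, c, d⟩
  have hA : Tendsto (fun n : ℕ => 1 - Real.exp (-bigR C n)) atTop (nhds 1) := by
    have h1 : Tendsto (fun n : ℕ => Real.exp (-bigR C n)) atTop (nhds 0) :=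
      Real.tendsto_exp_neg_atTop_nhds_zero.comp hR
    simpa using (tendsto_const_nhds (x := (1:ℝ))).sub h1
  have hB : Tendsto (fun n : ℕ => 1 - Real.exp (-(2 * rho C τ n))) atTop (nhds 1) := by
    have h1 : Tendsto (fun n : ℕ => Real.exp (-(2 * rho C τ n))) atTop (nhds 0) :=
      Real.tendsto_exp_neg_atTop_nhds_zero.comp
        (hrho.const_mul_atTop (show (0:ℝ) < 2 by norm_num))
    simpa using (tendsto_const_nhds (x := (1:ℝ))).sub h1
  have hseq : ∀ᶠ n : ℕ in atTop, sfun C τ n = Real.pi * gam n τ / (2 * n) *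
      ((1 - Real.exp (-bigR C n)) / (1 - Real.exp (-(2 * rho C τ n)))) := by
    filter_upwards [hEv] with n hn
    exact s_eq C τ hτ hn.1 hn.2.1 hn.2.2.1
  have h0 : Tendsto (fun n : ℕ => Real.pi * gam n τ / (2 * n)) atTop (nhds 0) := by
    have h1 := (gam_div_n_tendsto τ hτ).const_mul (Real.pi / 2)
    rw [mul_zero] at h1
    refine h1.congr fun n => by ring
  have hAB : Tendsto (fun n : ℕ => (1 - Real.exp (-bigR C n)) /
      (1 - Real.exp (-(2 * rho C τ n)))) atTop (nhds 1) := by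
    have := hA.div hB one_ne_zero
    rw [div_one] at this
    exact this
  have hs0 : Tendsto (fun n : ℕ => sfun C τ n) atTop (nhds 0) := by
    refine Tendsto.congr' (hseq.mono fun n hn => hn.symm) ?_
    simpa using h0.mul hAB
  have hspos : ∀ᶠ n : ℕ in atTop, 0 < sfun C τ n := by
    filter_upwards [hEv] with n hn
    exact div_pos (Real.sinh_pos_iff.2 (by linarith [hn.2.2.2]))
      (Real.sinh_pos_iff.2 hn.2.2.1)
  have hs1 : ∀ᶠ n : ℕ in atTop, sfun C τ n < 1 :=
    hs0.eventually_lt_const one_pos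
  have hteq : ∀ᶠ n : ℕ in atTop, theta C τ n = 2 * Real.arcsin (sfun C τ n) := by
    filter_upwards [hEv, hs1] with n hn h1
    exact theta_eq C τ hn.2.2.1 hn.2.2.2.le h1.le
  have hfinal : ∀ᶠ n : ℕ in atTop,
      2 * Real.pi / theta C τ n * gam n τ / (2 * n) =
      (1 - Real.exp (-(2 * rho C τ n))) / (1 - Real.exp (-bigR C n)) *
        (sfun C τ n / Real.arcsin (sfun C τ n)) := by
    filter_upwards [hEv, hseq, hteq, hspos, hs1] with n hn hs hth hsp hslt
    obtain ⟨hn1, hg, hr, hRp⟩ := hn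
    have hN : (0:ℝ) < n := by exact_mod_cast Nat.lt_of_lt_of_le Nat.zero_lt_one hn1
    have harc : 0 < Real.arcsin (sfun C τ n) := Real.arcsin_pos.2 hsp
    have hApos : 0 < 1 - Real.exp (-bigR C n) := by
      have : Real.exp (-bigR C n) < 1 := Real.exp_lt_one_iff.2 (by linarith)
      linarith
    have hBpos : 0 < 1 - Real.exp (-(2 * rho C τ n)) := by
      have : Real.exp (-(2 * rho C τ n)) < 1 := Real.exp_lt_one_iff.2 (by linarith)
      linarith
    have key : Real.pi * gam n τ / (2 * (n:ℝ)) = sfun C τ n *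
        ((1 - Real.exp (-(2 * rho C τ n))) / (1 - Real.exp (-bigR C n))) := by
      rw [hs]; field_simp
    rw [hth, show 2 * Real.pi / (2 * Real.arcsin (sfun C τ n)) * gam n τ / (2 * (n:ℝ)) =
      Real.pi * gam n τ / (2 * (n:ℝ)) / Real.arcsin (sfun C τ n) from by
        field_simp, key]
    ring
  have hsne : Tendsto (fun n : ℕ => sfun C τ n) atTop (nhdsWithin 0 {(0:ℝ)}ᶜ) := by
    refine tendsto_nhdsWithin_iff.2 ⟨hs0, ?_⟩
    filter_upwards [hspos] with n hn
    exact ne_of_gt hn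
  have l2 : Tendsto (fun n : ℕ => sfun C τ n / Real.arcsin (sfun C τ n)) atTop (nhds 1) :=
    arcsin_slope.comp hsne
  have hlim : Tendsto (fun n : ℕ =>
      (1 - Real.exp (-(2 * rho C τ n))) / (1 - Real.exp (-bigR C n)) *
        (sfun C τ n / Real.arcsin (sfun C τ n))) atTop (nhds 1) := by
    simpa using (hB.div hA one_ne_zero).mul l2
  exact Tendsto.congr' (hfinal.mono fun n hn => hn.symm) hlim
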